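/- Let N ≥ 3, α ≤ 0, and b ∈ [0,2]. For a nonempty set Σ ⊆ ℝ^N with distance function d_Σ, define for distinct points u,v the quantity Q(u,v) = |u-v|^{N-b} · max{|u-v|, d_Σ(u), d_Σ(v)}^{-α}. Then there exists a constant C = C(N, α, b) > 0 such that for all pairwise distinct x, y, z ∈ ℝ^N, Q(x,y) ≤ C (Q(x,z) + Q(z,y)). -/
import Mathlib


noncomputable def Qfun (N : ℕ) (α b : ℝ) (S : Set (EuclideanSpace ℝ (Fin N)))
    (u v : EuclideanSpace ℝ (Fin N)) : ℝ :=
  dist u v ^ ((N : ℝ) - b) *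
    (max (max (dist u v) (Metric.infDist u S)) (Metric.infDist v S)) ^ (-α)

lemma Qfun_nonneg (N : ℕ) (α b : ℝ) (S : Set (EuclideanSpace ℝ (Fin N)))
    (u v : EuclideanSpace ℝ (Fin N)) : 0 ≤ Qfun N α b S u v := by
  unfold Qfun
  have h1 : (0:ℝ) ≤ dist u v := dist_nonneg
  have h2 : (0:ℝ) ≤ max (max (dist u v) (Metric.infDist u S)) (Metric.infDist v S) :=
    le_trans Metric.infDist_nonneg (le_max_right _ _)
  exact mul_nonneg (Real.rpow_nonneg h1 _) (Real.rpow_nonneg h2 _)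

lemma Qfun_key (N : ℕ) (α b : ℝ) (hα : α ≤ 0) (hbN : b ≤ (N:ℝ))
    (S : Set (EuclideanSpace ℝ (Fin N))) (u v u' v' : EuclideanSpace ℝ (Fin N))
    (h1 : dist u v ≤ 2 * dist u' v')
    (h2 : max (max (dist u v) (Metric.infDist u S)) (Metric.infDist v S) ≤
        2 * max (max (dist u' v') (Metric.infDist u' S)) (Metric.infDist v' S)) :
    Qfun N α b S u v ≤ (2:ℝ) ^ ((N:ℝ) - b - α) * Qfun N α b S u' v' := by
  unfold Qfun
  have hp : (0:ℝ) ≤ (N:ℝ) - b := by linarith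
  have hq : (0:ℝ) ≤ -α := by linarith
  have hM : (0:ℝ) ≤ max (max (dist u v) (Metric.infDist u S)) (Metric.infDist v S) :=
    le_trans Metric.infDist_nonneg (le_max_right _ _)
  have hM' : (0:ℝ) ≤ max (max (dist u' v') (Metric.infDist u' S)) (Metric.infDist v' S) :=
    le_trans Metric.infDist_nonneg (le_max_right _ _)
  have hA : dist u v ^ ((N:ℝ) - b) ≤ (2 * dist u' v') ^ ((N:ℝ) - b) :=
    Real.rpow_le_rpow dist_nonneg h1 hp
  have hB : (max (max (dist u v) (Metric.infDist u S)) (Metric.infDist v S)) ^ (-α) ≤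
      (2 * max (max (dist u' v') (Metric.infDist u' S)) (Metric.infDist v' S)) ^ (-α) :=
    Real.rpow_le_rpow hM h2 hq
  calc dist u v ^ ((N:ℝ) - b) *
        (max (max (dist u v) (Metric.infDist u S)) (Metric.infDist v S)) ^ (-α)
      ≤ (2 * dist u' v') ^ ((N:ℝ) - b) *
        (2 * max (max (dist u' v') (Metric.infDist u' S)) (Metric.infDist v' S)) ^ (-α) := by
        exact mul_le_mul hA hB (Real.rpow_nonneg hM _) (Real.rpow_nonneg (by positivity) _)
    _ = (2:ℝ) ^ ((N:ℝ) - b - α) *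
        (dist u' v' ^ ((N:ℝ) - b) *
          (max (max (dist u' v') (Metric.infDist u' S)) (Metric.infDist v' S)) ^ (-α)) := by
        rw [Real.mul_rpow (by norm_num) dist_nonneg, Real.mul_rpow (by norm_num) hM',
          show (N:ℝ) - b - α = ((N:ℝ) - b) + (-α) by ring,
          Real.rpow_add (by norm_num : (0:ℝ) < 2)]
        ring

theorem Qfun_quasi_triangle (N : ℕ) (hN : 3 ≤ N) (α b : ℝ)
    (hα : α ≤ 0) (hb0 : 0 ≤ b) (hb2 : b ≤ 2)
    (S : Set (EuclideanSpace ℝ (Fin N))) (hS : S.Nonempty) :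
    ∃ C > 0, ∀ x y z : EuclideanSpace ℝ (Fin N), x ≠ y → x ≠ z → y ≠ z →
      Qfun N α b S x y ≤ C * (Qfun N α b S x z + Qfun N α b S z y) := by
  have hbN : b ≤ (N:ℝ) := by
    have : (3:ℝ) ≤ (N:ℝ) := by exact_mod_cast hN
    linarith
  refine ⟨(2:ℝ) ^ ((N:ℝ) - b - α), Real.rpow_pos_of_pos (by norm_num) _, ?_⟩
  intro x y z _ _ _
  rcases le_total (dist z y) (dist x z) with hc | hc
  · -- use Q(x,z)
    have h1 : dist x y ≤ 2 * dist x z := by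
      have := dist_triangle x z y
      linarith
    have h2 : max (max (dist x y) (Metric.infDist x S)) (Metric.infDist y S) ≤
        2 * max (max (dist x z) (Metric.infDist x S)) (Metric.infDist z S) := by
      set M := max (max (dist x z) (Metric.infDist x S)) (Metric.infDist z S) with hM
      have hdM : dist x z ≤ M := le_trans (le_max_left _ _) (le_max_left _ _)
      have hxM : Metric.infDist x S ≤ M := le_trans (le_max_right _ _) (le_max_left _ _)
      have hzM : Metric.infDist z S ≤ M := le_max_right _ _
      have hy : Metric.infDist y S ≤ Metric.infDist z S + dist y z :=
        Metric.infDist_le_infDist_add_dist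
      have hyz : dist y z = dist z y := dist_comm y z
      have hM0 : (0:ℝ) ≤ M := le_trans Metric.infDist_nonneg (le_max_right _ _)
      refine max_le (max_le ?_ ?_) ?_
      · linarith
      · linarith
      · linarith
    have := Qfun_key N α b hα hbN S x y x z h1 h2
    have hnn := Qfun_nonneg N α b S z y
    nlinarith [Real.rpow_pos_of_pos (show (0:ℝ) < 2 by norm_num) ((N:ℝ) - b - α)]
  · -- use Q(z,y)
    have h1 : dist x y ≤ 2 * dist z y := by
      have := dist_triangle x z y
      linarith
    have h2 : max (max (dist x y) (Metric.infDist x S)) (Metric.infDist y S) ≤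
        2 * max (max (dist z y) (Metric.infDist z S)) (Metric.infDist y S) := by
      set M := max (max (dist z y) (Metric.infDist z S)) (Metric.infDist y S) with hM
      have hdM : dist z y ≤ M := le_trans (le_max_left _ _) (le_max_left _ _)
      have hzM : Metric.infDist z S ≤ M := le_trans (le_max_right _ _) (le_max_left _ _)
      have hyM : Metric.infDist y S ≤ M := le_max_right _ _
      have hx : Metric.infDist x S ≤ Metric.infDist z S + dist x z :=
        Metric.infDist_le_infDist_add_dist
      have hM0 : (0:ℝ) ≤ M := le_trans Metric.infDist_nonneg (le_max_right _ _)
      refine max_le (max_le ?_ ?_) ?_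
      · linarith
      · linarith
      · linarith
    have := Qfun_key N α b hα hbN S x y z y h1 h2
    have hnn := Qfun_nonneg N α b S x z
    nlinarith [Real.rpow_pos_of_pos (show (0:ℝ) < 2 by norm_num) ((N:ℝ) - b - α)]
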